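/- Let W be a contraction on a Hilbert space H with Ker W = {0}, with minimal unitary dilation U on K ⊇ H. Let L := closure((U − W)H) ⊆ K (viewing W as P_H U|_H) and let R := K ⊖ M(L*) be the residual subspace, where L* := closure((U* − W*)H). Then R ∩ M₊(L) = {0}, where M₊(L) = ⊕_{n≥0} UⁿL. -/

import Mathlib

open scoped InnerProductSpace

/-- For a contraction `W` with trivial kernel and minimal unitary dilation `U`,
with wandering subspaces `L = closure((U−W)H)` and `L* = closure((U*−W*)H)`, the residual
subspace `R = K ⊖ M(L*)` satisfies `R ∩ M₊(L) = {0}`. -/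
theorem residual_inter_Mplus_eq_bot
    {H K : Type*}
    [NormedAddCommGroup H] [InnerProductSpace ℂ H] [CompleteSpace H]
    [NormedAddCommGroup K] [InnerProductSpace ℂ K] [CompleteSpace K]
    (J : H →ₗᵢ[ℂ] K)
    (W : H →L[ℂ] H) (hW : ‖W‖ ≤ 1) (hker : LinearMap.ker (W : H →ₗ[ℂ] H) = ⊥)
    (U : K ≃ₗᵢ[ℂ] K)
    (hdil : ∀ (n : ℕ) (h : H),
      (W ^ n) h = (ContinuousLinearMap.adjoint J.toContinuousLinearMap) ((U ^ (n : ℤ)) (J h)))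
    (hmin : Dense (↑(Submodule.span ℂ {x : K | ∃ (n : ℤ) (h : H), x = (U ^ n) (J h)}) : Set K))
    (Ls Lstar MLstar R MpL : Submodule ℂ K)
    (hLs : Ls = (Submodule.span ℂ {x : K | ∃ h : H, x = U (J h) - J (W h)}).topologicalClosure)
    (hLstar : Lstar = (Submodule.span ℂ
      {x : K | ∃ h : H, x = U.symm (J h) - J ((ContinuousLinearMap.adjoint W) h)}).topologicalClosure)
    (hMLstar : MLstar = (⨆ n : ℤ,
      Submodule.map ((U ^ n).toLinearEquiv : K →ₗ[ℂ] K) Lstar).topologicalClosure)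
    (hR : R = MLstarᗮ)
    (hMpL : MpL = (⨆ n : ℕ,
      Submodule.map ((U ^ (n : ℤ)).toLinearEquiv : K →ₗ[ℂ] K) Ls).topologicalClosure) :
    R ⊓ MpL = ⊥ := by
  set P := ContinuousLinearMap.adjoint J.toContinuousLinearMap with hPdef
  -- basic inner-product facts
  have hUadd : ∀ (m k : ℤ) (y : K), (U ^ (m + k)) y = (U ^ m) ((U ^ k) y) := by
    intro m k y; rw [zpow_add]; rfl
  have hJP : ∀ (h : H) (y : K), ⟪(J h : K), y⟫_ℂ = ⟪h, P y⟫_ℂ := by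
    intro h y
    rw [hPdef, ContinuousLinearMap.adjoint_inner_right]
    congr 1
  rw [eq_bot_iff]
  rintro x hx
  obtain ⟨hxR, hxM⟩ := Submodule.mem_inf.mp hx
  rw [Submodule.mem_bot]
  rw [hR] at hxR
  -- the key sequence p n = P (Uⁿ x)
  set p : ℤ → H := fun n => P ((U ^ n) x) with hpdef
  -- Step B : x is orthogonal to all Uⁿ L*, in shifted form
  have horthL : ∀ (n : ℤ) (h : H),
      ⟪U.symm (J h) - J ((ContinuousLinearMap.adjoint W) h), (U ^ n) x⟫_ℂ = 0 := by
    intro n h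
    set g : K := U.symm (J h) - J ((ContinuousLinearMap.adjoint W) h) with hg
    have hgL : g ∈ Lstar := by
      rw [hLstar]
      exact Submodule.le_topologicalClosure _ (Submodule.subset_span ⟨h, rfl⟩)
    have hmem : (U ^ (-n)) g ∈ MLstar := by
      rw [hMLstar]
      apply Submodule.le_topologicalClosure
      exact le_iSup (fun m : ℤ => Submodule.map ((U ^ m).toLinearEquiv : K →ₗ[ℂ] K) Lstar) (-n)
        ⟨g, hgL, rfl⟩
    have h0 : ⟪(U ^ (-n)) g, x⟫_ℂ = 0 := (Submodule.mem_orthogonal _ _).mp hxR _ hmem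
    calc ⟪g, (U ^ n) x⟫_ℂ = ⟪(U ^ n) ((U ^ (-n)) g), (U ^ n) x⟫_ℂ := by
          rw [← hUadd, add_neg_cancel, zpow_zero]; rfl
      _ = ⟪(U ^ (-n)) g, x⟫_ℂ := (U ^ n).inner_map_map _ _
      _ = 0 := h0
  -- Step C : recursion W (p n) = p (n+1)
  have hrec : ∀ n : ℤ, W (p n) = p (n + 1) := by
    intro n
    apply ext_inner_left ℂ
    intro h
    have h1 : ⟪h, W (p n)⟫_ℂ = ⟪(J ((ContinuousLinearMap.adjoint W) h) : K), (U ^ n) x⟫_ℂ := by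
      rw [← ContinuousLinearMap.adjoint_inner_left, hJP]
    have h2 : ⟪h, p (n + 1)⟫_ℂ = ⟪(U.symm (J h) : K), (U ^ n) x⟫_ℂ := by
      have : ((U ^ (n + 1)) x) = U ((U ^ n) x) := by
        rw [add_comm, hUadd]; rfl
      rw [hpdef]; simp only [this, ← hJP]
      rw [← U.inner_map_map (U.symm (J h)) ((U ^ n) x), U.apply_symm_apply]
    have h3 := horthL n h
    rw [inner_sub_left, sub_eq_zero] at h3
    rw [h1, h2, ← h3]
  -- Step D : p 0 = 0 since x ∈ M₊(L) ⟂ J H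
  have hJx : ∀ h : H, ⟪(J h : K), x⟫_ℂ = 0 := by
    intro h
    have hle : MpL ≤ (ℂ ∙ (J h : K))ᗮ := by
      rw [hMpL]
      apply Submodule.topologicalClosure_minimal
      · apply iSup_le
        intro n
        rw [Submodule.map_le_iff_le_comap, hLs]
        apply Submodule.topologicalClosure_minimal
        · rw [Submodule.span_le]
          rintro y ⟨g, rfl⟩
          rw [SetLike.mem_coe, Submodule.mem_comap]
          rw [Submodule.mem_orthogonal_singleton_iff_inner_right]
          have e1 : ((U ^ (n : ℤ)).toLinearEquiv : K →ₗ[ℂ] K) (U (J g) - J (W g))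
              = (U ^ ((n : ℤ) + 1)) (J g) - (U ^ (n : ℤ)) (J (W g)) := by
            simp only [map_sub, LinearEquiv.coe_coe, LinearIsometryEquiv.coe_toLinearEquiv,
              hUadd, zpow_one]
          rw [e1, inner_sub_right, hJP, hJP]
          have e2 : P ((U ^ ((n : ℤ) + 1)) (J g)) = (W ^ (n + 1)) g := by
            rw [hdil (n + 1) g]; push_cast; ring_nf
          have e3 : P ((U ^ (n : ℤ)) (J (W g))) = (W ^ n) (W g) := by
            rw [hdil n (W g)]
          rw [e2, e3, pow_succ, ContinuousLinearMap.mul_apply, sub_self]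
        · have : (↑(Submodule.comap ((U ^ (n : ℤ)).toLinearEquiv : K →ₗ[ℂ] K)
              (ℂ ∙ (J h : K))ᗮ) : Set K)
              = (⇑(U ^ (n : ℤ)) : K → K) ⁻¹' ((ℂ ∙ (J h : K))ᗮ : Set K) := rfl
          rw [this]
          exact (Submodule.isClosed_orthogonal _).preimage (U ^ (n : ℤ)).continuous
      · exact Submodule.isClosed_orthogonal _
    exact Submodule.mem_orthogonal_singleton_iff_inner_right.mp (hle hxM)
  have hp0 : p 0 = 0 := by
    apply ext_inner_left ℂ
    intro h
    rw [inner_zero_right, hpdef]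
    simp only [zpow_zero]
    have : ((1 : K ≃ₗᵢ[ℂ] K) x) = x := rfl
    rw [this, ← hJP]
    exact hJx h
  -- Step E : p n = 0 for all n
  have hinj : Function.Injective W := LinearMap.ker_eq_bot.mp hker
  have hpn : ∀ n : ℤ, p n = 0 := by
    intro n
    induction n using Int.induction_on with
    | zero => exact hp0
    | succ k ih => rw [← hrec, ih, map_zero]
    | pred k ih =>
      have h1 : W (p (-(k : ℤ) - 1)) = p (-(k : ℤ)) := by
        rw [hrec]; ring_nf
      apply hinj
      rw [h1, map_zero, ih]
  -- Step F : x is orthogonal to a dense subspace, hence 0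
  have hbot : (Submodule.span ℂ {y : K | ∃ (n : ℤ) (h : H), y = (U ^ n) (J h)})ᗮ = ⊥ := by
    rw [← Submodule.topologicalClosure_eq_top_iff]
    exact Submodule.dense_iff_topologicalClosure_eq_top.mp hmin
  have hxmem : x ∈ (Submodule.span ℂ {y : K | ∃ (n : ℤ) (h : H), y = (U ^ n) (J h)})ᗮ := by
    rw [Submodule.mem_orthogonal']
    intro u hu
    have hle : Submodule.span ℂ {y : K | ∃ (n : ℤ) (h : H), y = (U ^ n) (J h)}
        ≤ (ℂ ∙ x)ᗮ := by
      rw [Submodule.span_le]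
      rintro y ⟨n, h, rfl⟩
      rw [SetLike.mem_coe, Submodule.mem_orthogonal_singleton_iff_inner_right]
      have : ⟪(U ^ n) (J h), x⟫_ℂ = 0 := by
        calc ⟪(U ^ n) (J h), x⟫_ℂ = ⟪(U ^ n) (J h), (U ^ n) ((U ^ (-n)) x)⟫_ℂ := by
              rw [← hUadd, add_neg_cancel, zpow_zero]; rfl
          _ = ⟪(J h : K), (U ^ (-n)) x⟫_ℂ := (U ^ n).inner_map_map _ _
          _ = ⟪h, p (-n)⟫_ℂ := hJP _ _
          _ = 0 := by rw [hpn, inner_zero_right]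
      rw [← inner_conj_symm, this, map_zero]
    have := hle hu
    rw [Submodule.mem_orthogonal_singleton_iff_inner_right] at this
    exact this
  rw [hbot] at hxmem
  exact hxmem
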